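/- The kernel g is nonincreasing on (0, ∞), and for every fixed T > 0 there exists a constant C (depending only on μ and T) such that g(t) ≤ C · t^{γ-1} for all 0 < t ≤ T. -/

import Mathlib

open MeasureTheory Real Set

set_option maxHeartbeats 1000000 in
/-- The kernel `g` is nonincreasing on `(0, ∞)`, and for every fixed `T > 0`
there exists a constant `C` (depending only on `μ` and `T`) such that
`g(t) ≤ C t^{γ-1}` for all `0 < t ≤ T`. -/
theorem stmt_8 (μ : ℝ → ℝ)
    (hμ_int : IntegrableOn μ (Ioo 0 1))
    (hμ_nonneg : ∀ α ∈ Ioo (0:ℝ) 1, 0 ≤ μ α)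
    (hμ_ne : ¬ (∀ᵐ α ∂(volume.restrict (Ioo (0:ℝ) 1)), μ α = 0))
    (hcμ : 0 < ∫ α in Ioo (0:ℝ) 1, μ α)
    (γ : ℝ) (hγ : γ ∈ Ioo (0:ℝ) (1/2))
    (hγμ : (∫ α in Ioo γ (1 - γ), μ α) = ((1 - γ) / 2) * ∫ α in Ioo (0:ℝ) 1, μ α)
    (S C g : ℝ → ℝ)
    (hS : ∀ r : ℝ, S r = ∫ α in Ioo (0:ℝ) 1, Real.sin (π * α) * r ^ α * μ α)
    (hC : ∀ r : ℝ, C r = ∫ α in Ioo (0:ℝ) 1, Real.cos (π * α) * r ^ α * μ α)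
    (hg : ∀ t : ℝ, 0 < t →
      g t = (1/π) * ∫ r in Ioi (0:ℝ), Real.exp (-r * t) * S r / ((S r)^2 + (C r)^2)) :
    AntitoneOn g (Ioi 0) ∧
    (∀ T : ℝ, 0 < T → ∃ C₀ : ℝ, ∀ t : ℝ, 0 < t → t ≤ T → g t ≤ C₀ * t ^ (γ - 1)) := by
  obtain ⟨hγ0, hγ2⟩ := hγ
  have hγ1 : γ < 1 := by linarith
  have hπ : (0:ℝ) < π := Real.pi_pos
  set cμ : ℝ := ∫ α in Ioo (0:ℝ) 1, μ α with hcμdef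
  have hsinγ : 0 < Real.sin (π * γ) :=
    Real.sin_pos_of_pos_of_lt_pi (by positivity) (by nlinarith)
  set K : ℝ := Real.sin (π * γ) * ((1 - γ) / 2 * cμ) with hKdef
  have hK : 0 < K := by
    apply mul_pos hsinγ; apply mul_pos (by linarith) hcμ
  have hsub : Ioo γ (1 - γ) ⊆ Ioo (0:ℝ) 1 := by
    intro x hx; exact ⟨lt_trans hγ0 hx.1, by nlinarith [hx.2]⟩
  -- sin lower bound on [γ, 1-γ]
  have hsin_ge : ∀ α ∈ Icc γ (1 - γ), Real.sin (π * γ) ≤ Real.sin (π * α) := by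
    have base : ∀ α, γ ≤ α → α ≤ 1/2 → Real.sin (π * γ) ≤ Real.sin (π * α) := by
      intro α h1 h2
      apply Real.strictMonoOn_sin.monotoneOn ⟨by nlinarith, by nlinarith⟩
        ⟨by nlinarith, by nlinarith⟩ (by nlinarith)
    intro α hα
    obtain ⟨h1, h2⟩ := hα
    rcases le_total α (1/2) with hα2 | hα2
    · exact base α h1 hα2
    · have heq : Real.sin (π * α) = Real.sin (π * (1 - α)) := by
        rw [mul_one_sub, Real.sin_pi_sub]
      rw [heq]
      exact base (1 - α) (by linarith) (by linarith)
  -- rpow lower bound on [γ, 1-γ]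
  have hrpow_ge : ∀ r : ℝ, 0 < r → ∀ α ∈ Icc γ (1 - γ),
      min (r ^ γ) (r ^ (1 - γ)) ≤ r ^ α := by
    intro r hr α hα
    obtain ⟨h1, h2⟩ := hα
    rcases le_total 1 r with h | h
    · exact le_trans (min_le_left _ _) (Real.rpow_le_rpow_of_exponent_le h h1)
    · exact le_trans (min_le_right _ _) (Real.rpow_le_rpow_of_exponent_ge hr h h2)
  have hrpow_ub : ∀ r : ℝ, 0 < r → ∀ α ∈ Ioo (0:ℝ) 1, r ^ α ≤ max 1 r := by
    intro r hr α hα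
    rcases le_total 1 r with h | h
    · refine le_trans ?_ (le_max_right _ _)
      calc r ^ α ≤ r ^ (1:ℝ) := Real.rpow_le_rpow_of_exponent_le h hα.2.le
        _ = r := Real.rpow_one r
    · exact le_trans (Real.rpow_le_one hr.le h hα.1.le) (le_max_left _ _)
  -- integrability of the S/C integrands
  have hfr_int : ∀ (c : ℝ → ℝ), Continuous c → (∀ x, |c x| ≤ 1) → ∀ r : ℝ, 0 < r →
      IntegrableOn (fun α => c α * r ^ α * μ α) (Ioo (0:ℝ) 1) := by
    intro c hc hc1 r hr
    have hcont : Continuous (fun α : ℝ => r ^ α) := by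
      have heq : (fun α : ℝ => r ^ α) = fun α => Real.exp (Real.log r * α) := by
        funext α; rw [Real.rpow_def_of_pos hr]
      rw [heq]
      exact Real.continuous_exp.comp (continuous_const.mul continuous_id)
    have h1 : IntegrableOn (fun α => (fun β => c β * r ^ β) α * μ α) (Ioo (0:ℝ) 1) := by
      apply hμ_int.bdd_mul (c := max 1 r) ((hc.mul hcont).aestronglyMeasurable)
      filter_upwards [ae_restrict_mem measurableSet_Ioo] with α hα
      rw [Real.norm_eq_abs, Pi.mul_apply, abs_mul]
      have h2 : |r ^ α| = r ^ α := abs_of_nonneg (Real.rpow_nonneg hr.le α)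
      have h3 := hrpow_ub r hr α hα
      have h4 := hc1 α
      have h5 : (0:ℝ) ≤ r ^ α := Real.rpow_nonneg hr.le α
      have h6 : (1:ℝ) ≤ max 1 r := le_max_left _ _
      rw [h2]
      nlinarith [abs_nonneg (c α)]
    exact h1
  have hsin1 : ∀ x : ℝ, |Real.sin (π * x)| ≤ 1 := fun x => Real.abs_sin_le_one _
  have hcos1 : ∀ x : ℝ, |Real.cos (π * x)| ≤ 1 := fun x => Real.abs_cos_le_one _
  have hsincont : Continuous (fun x : ℝ => Real.sin (π * x)) :=
    Real.continuous_sin.comp (continuous_const.mul continuous_id)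
  have hcoscont : Continuous (fun x : ℝ => Real.cos (π * x)) :=
    Real.continuous_cos.comp (continuous_const.mul continuous_id)
  -- lower bound for S
  have hS_lb : ∀ r : ℝ, 0 < r → K * min (r ^ γ) (r ^ (1 - γ)) ≤ S r := by
    intro r hr
    set m : ℝ := min (r ^ γ) (r ^ (1 - γ)) with hm
    have hmpos : 0 < m :=
      lt_min (Real.rpow_pos_of_pos hr _) (Real.rpow_pos_of_pos hr _)
    have hint := hfr_int _ hsincont hsin1 r hr
    have step1 : K * m = ∫ α in Ioo γ (1 - γ), (Real.sin (π * γ) * m) * μ α := by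
      rw [integral_const_mul, hγμ, hKdef]; ring
    have step2 : (∫ α in Ioo γ (1 - γ), (Real.sin (π * γ) * m) * μ α)
        ≤ ∫ α in Ioo γ (1 - γ), Real.sin (π * α) * r ^ α * μ α := by
      apply setIntegral_mono_on ((hμ_int.mono_set hsub).const_mul _)
        (hint.mono_set hsub) measurableSet_Ioo
      intro α hα
      have hμα : 0 ≤ μ α := hμ_nonneg α (hsub hα)
      have h1 := hsin_ge α ⟨hα.1.le, hα.2.le⟩
      have h2 := hrpow_ge r hr α ⟨hα.1.le, hα.2.le⟩
      have h3 : 0 ≤ Real.sin (π * α) := le_trans hsinγ.le h1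
      have h4 : Real.sin (π * γ) * m ≤ Real.sin (π * α) * r ^ α :=
        mul_le_mul h1 h2 hmpos.le h3
      exact mul_le_mul_of_nonneg_right h4 hμα
    have step3 : (∫ α in Ioo γ (1 - γ), Real.sin (π * α) * r ^ α * μ α)
        ≤ ∫ α in Ioo (0:ℝ) 1, Real.sin (π * α) * r ^ α * μ α := by
      apply setIntegral_mono_set hint
      · filter_upwards [ae_restrict_mem measurableSet_Ioo] with α hα
        have h1 : 0 ≤ Real.sin (π * α) :=
          Real.sin_nonneg_of_nonneg_of_le_pi (by nlinarith [hα.1]) (by nlinarith [hα.2])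
        have h2 : (0:ℝ) ≤ r ^ α := Real.rpow_nonneg hr.le α
        have h3 := hμ_nonneg α hα
        positivity
      · exact HasSubset.Subset.eventuallyLE hsub
    rw [hS r]
    calc K * m = _ := step1
      _ ≤ _ := step2
      _ ≤ _ := step3
  have hS_pos : ∀ r : ℝ, 0 < r → 0 < S r := fun r hr =>
    lt_of_lt_of_le (mul_pos hK (lt_min (Real.rpow_pos_of_pos hr _)
      (Real.rpow_pos_of_pos hr _))) (hS_lb r hr)
  -- pointwise bound for the integrand
  have hbound : ∀ t : ℝ, 0 < t → ∀ r ∈ Ioi (0:ℝ),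
      Real.exp (-r * t) * S r / ((S r)^2 + (C r)^2)
        ≤ (1/K) * (r ^ (γ - 1) * Real.exp (-(t * r)) + r ^ (-γ) * Real.exp (-(t * r))) := by
    intro t ht r hr
    rw [mem_Ioi] at hr
    set m : ℝ := min (r ^ γ) (r ^ (1 - γ)) with hm
    have hmpos : 0 < m :=
      lt_min (Real.rpow_pos_of_pos hr _) (Real.rpow_pos_of_pos hr _)
    have hSpos := hS_pos r hr
    have hSlb := hS_lb r hr
    have hden : (0:ℝ) < (S r)^2 + (C r)^2 := by nlinarith [sq_nonneg (C r)]
    have h1 : Real.exp (-r * t) * S r / ((S r)^2 + (C r)^2)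
        ≤ Real.exp (-r * t) * S r / (S r)^2 := by
      apply div_le_div_of_nonneg_left (by positivity) (by positivity)
      nlinarith [sq_nonneg (C r)]
    have h2 : Real.exp (-r * t) * S r / (S r)^2 = Real.exp (-r * t) / S r := by
      rw [sq]; field_simp
    have h3 : Real.exp (-r * t) / S r ≤ Real.exp (-r * t) / (K * m) := by
      apply div_le_div_of_nonneg_left (Real.exp_nonneg _) (by positivity) hSlb
    have hminv : 1 / m ≤ r ^ (γ - 1) + r ^ (-γ) := by
      have ha : (0:ℝ) ≤ r ^ (γ - 1) := Real.rpow_nonneg hr.le _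
      have hb : (0:ℝ) ≤ r ^ (-γ) := Real.rpow_nonneg hr.le _
      rcases min_cases (r ^ γ) (r ^ (1 - γ)) with he | he
      · rw [hm, he.1, one_div, ← Real.rpow_neg hr.le]
        linarith
      · rw [hm, he.1, one_div, ← Real.rpow_neg hr.le,
          show -(1 - γ) = γ - 1 by ring]
        linarith
    have h4 : Real.exp (-r * t) / (K * m)
        ≤ (1/K) * (r ^ (γ - 1) * Real.exp (-(t * r)) + r ^ (-γ) * Real.exp (-(t * r))) := by
      have he : (-r * t : ℝ) = -(t * r) := by ring
      rw [he]
      have hKne : K ≠ 0 := ne_of_gt hK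
      have hmne : m ≠ 0 := ne_of_gt hmpos
      have heq2 : Real.exp (-(t * r)) / (K * m)
          = (1/K) * (Real.exp (-(t * r)) * (1/m)) := by field_simp
      rw [heq2]
      have h5 : Real.exp (-(t * r)) * (1/m) ≤ Real.exp (-(t * r)) * (r ^ (γ - 1) + r ^ (-γ)) :=
        mul_le_mul_of_nonneg_left hminv (Real.exp_nonneg _)
      calc (1/K) * (Real.exp (-(t * r)) * (1/m))
          ≤ (1/K) * (Real.exp (-(t * r)) * (r ^ (γ - 1) + r ^ (-γ))) :=
            mul_le_mul_of_nonneg_left h5 (by positivity)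
        _ = (1/K) * (r ^ (γ - 1) * Real.exp (-(t * r)) + r ^ (-γ) * Real.exp (-(t * r))) := by
            ring
    calc Real.exp (-r * t) * S r / ((S r)^2 + (C r)^2)
        ≤ Real.exp (-r * t) * S r / (S r)^2 := h1
      _ = Real.exp (-r * t) / S r := h2
      _ ≤ Real.exp (-r * t) / (K * m) := h3
      _ ≤ _ := h4
  have hh_nonneg : ∀ t : ℝ, 0 < t → ∀ r ∈ Ioi (0:ℝ),
      0 ≤ Real.exp (-r * t) * S r / ((S r)^2 + (C r)^2) := by
    intro t ht r hr
    rw [mem_Ioi] at hr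
    have h1 := (hS_pos r hr).le
    positivity
  -- integrability of the dominating function and its integral
  have hG_int1 : ∀ t : ℝ, 0 < t → ∀ s : ℝ, -1 < s →
      IntegrableOn (fun r : ℝ => r ^ s * Real.exp (-(t * r))) (Ioi 0) := by
    intro t ht s hs
    have := integrableOn_rpow_mul_exp_neg_mul_rpow (p := 1) (s := s) (b := t) hs zero_lt_one ht
    apply this.congr_fun ?_ measurableSet_Ioi
    intro x _
    simp only [Real.rpow_one, neg_mul]
  have hG_int : ∀ t : ℝ, 0 < t →
      Integrable (fun r : ℝ => (1/K) * (r ^ (γ - 1) * Real.exp (-(t * r))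
        + r ^ (-γ) * Real.exp (-(t * r)))) (volume.restrict (Ioi 0)) := by
    intro t ht
    exact (((hG_int1 t ht (γ - 1) (by linarith)).add
      (hG_int1 t ht (-γ) (by linarith))).const_mul _)
  have hG_val : ∀ t : ℝ, 0 < t →
      (∫ r in Ioi (0:ℝ), (1/K) * (r ^ (γ - 1) * Real.exp (-(t * r))
        + r ^ (-γ) * Real.exp (-(t * r))))
      = (1/K) * ((1/t) ^ γ * Real.Gamma γ + (1/t) ^ (1 - γ) * Real.Gamma (1 - γ)) := by
    intro t ht
    rw [integral_const_mul,
      integral_add (hG_int1 t ht (γ - 1) (by linarith)) (hG_int1 t ht (-γ) (by linarith))]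
    have e1 := integral_rpow_mul_exp_neg_mul_Ioi (a := γ) (r := t) hγ0 ht
    have e2 := integral_rpow_mul_exp_neg_mul_Ioi (a := 1 - γ) (r := t) (by linarith) ht
    rw [e1, show (-γ : ℝ) = (1 - γ) - 1 by ring, e2]
  -- the main integral bound
  have hg_le : ∀ t : ℝ, 0 < t →
      g t ≤ (1/π) * ((1/K) * ((1/t) ^ γ * Real.Gamma γ + (1/t) ^ (1 - γ) * Real.Gamma (1 - γ))) := by
    intro t ht
    rw [hg t ht]
    have hπ' : (0:ℝ) ≤ 1/π := by positivity
    refine mul_le_mul_of_nonneg_left ?_ hπ'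
    rw [← hG_val t ht]
    apply integral_mono_of_nonneg
    · filter_upwards [ae_restrict_mem measurableSet_Ioi] with r hr
      exact hh_nonneg t ht r hr
    · exact hG_int t ht
    · filter_upwards [ae_restrict_mem measurableSet_Ioi] with r hr
      exact hbound t ht r hr
  -- continuity / measurability of the integrand, needed for antitonicity
  have hcont_param : ∀ (c : ℝ → ℝ), Continuous c → (∀ x, |c x| ≤ 1) →
      ContinuousOn (fun r : ℝ => ∫ α in Ioo (0:ℝ) 1, c α * r ^ α * μ α) (Ioi 0) := by
    intro c hc hc1
    intro r₀ hr₀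
    rw [mem_Ioi] at hr₀
    apply ContinuousAt.continuousWithinAt
    apply continuousAt_of_dominated (bound := fun α => (r₀ + 1) * |μ α|)
    · filter_upwards [Ioo_mem_nhds hr₀ (lt_add_one r₀)] with r hr
      have hcont : Continuous (fun α : ℝ => r ^ α) := by
        have heq : (fun α : ℝ => r ^ α) = fun α => Real.exp (Real.log r * α) := by
          funext α; rw [Real.rpow_def_of_pos hr.1]
        rw [heq]
        exact Real.continuous_exp.comp (continuous_const.mul continuous_id)
      exact ((hc.mul hcont).aestronglyMeasurable).mul hμ_int.1
    · filter_upwards [Ioo_mem_nhds hr₀ (lt_add_one r₀)] with r hr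
      filter_upwards [ae_restrict_mem measurableSet_Ioo] with α hα
      have h2 : |r ^ α| = r ^ α := abs_of_nonneg (Real.rpow_nonneg hr.1.le α)
      have h3 := hrpow_ub r hr.1 α hα
      have hmax : max 1 r ≤ r₀ + 1 := max_le (by linarith) hr.2.le
      have h4 := hc1 α
      have h5 : (0:ℝ) ≤ r ^ α := Real.rpow_nonneg hr.1.le α
      rw [Real.norm_eq_abs, abs_mul, abs_mul, h2]
      have h6 : |c α| * r ^ α ≤ r₀ + 1 :=
        le_trans (le_trans (by nlinarith [mul_le_mul_of_nonneg_right h4 h5] : |c α| * r ^ α ≤ r ^ α)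
          h3) hmax
      exact mul_le_mul_of_nonneg_right h6 (abs_nonneg _)
    · exact (hμ_int.abs).const_mul _
    · filter_upwards with α
      have h1 : ContinuousAt (fun r : ℝ => r ^ α) r₀ :=
        Real.continuousAt_rpow_const r₀ α (Or.inl (ne_of_gt hr₀))
      exact ((h1.const_mul _).mul continuousAt_const)
  have hScont : ContinuousOn S (Ioi 0) := by
    have heq : S = fun r : ℝ => ∫ α in Ioo (0:ℝ) 1, Real.sin (π * α) * r ^ α * μ α :=
      funext hS
    rw [heq]
    exact hcont_param _ hsincont hsin1
  have hCcont : ContinuousOn C (Ioi 0) := by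
    have heq : C = fun r : ℝ => ∫ α in Ioo (0:ℝ) 1, Real.cos (π * α) * r ^ α * μ α :=
      funext hC
    rw [heq]
    exact hcont_param _ hcoscont hcos1
  have hhcont : ∀ t : ℝ, ContinuousOn
      (fun r : ℝ => Real.exp (-r * t) * S r / ((S r)^2 + (C r)^2)) (Ioi 0) := by
    intro t
    apply ContinuousOn.div
    · exact ((Real.continuous_exp.comp ((continuous_id.neg).mul continuous_const)).continuousOn).mul
        hScont
    · exact (hScont.pow 2).add (hCcont.pow 2)
    · intro r hr
      rw [mem_Ioi] at hr
      have := hS_pos r hr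
      positivity
  have hh_int : ∀ t : ℝ, 0 < t →
      IntegrableOn (fun r : ℝ => Real.exp (-r * t) * S r / ((S r)^2 + (C r)^2)) (Ioi 0) := by
    intro t ht
    apply Integrable.mono' (hG_int t ht)
      ((hhcont t).aestronglyMeasurable measurableSet_Ioi)
    filter_upwards [ae_restrict_mem measurableSet_Ioi] with r hr
    rw [Real.norm_eq_abs, abs_of_nonneg (hh_nonneg t ht r hr)]
    exact hbound t ht r hr
  constructor
  · -- antitone
    intro t₁ ht₁ t₂ ht₂ h12
    rw [mem_Ioi] at ht₁ ht₂
    rw [hg t₁ ht₁, hg t₂ ht₂]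
    have hπ' : (0:ℝ) ≤ 1/π := by positivity
    refine mul_le_mul_of_nonneg_left ?_ hπ'
    apply integral_mono_of_nonneg
    · filter_upwards [ae_restrict_mem measurableSet_Ioi] with r hr
      exact hh_nonneg t₂ ht₂ r hr
    · exact hh_int t₁ ht₁
    · filter_upwards [ae_restrict_mem measurableSet_Ioi] with r hr
      rw [mem_Ioi] at hr
      have hSr := (hS_pos r hr).le
      have hden : (0:ℝ) < (S r)^2 + (C r)^2 := by
        nlinarith [hS_pos r hr, sq_nonneg (C r)]
      have hexp : Real.exp (-r * t₂) ≤ Real.exp (-r * t₁) :=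
        Real.exp_le_exp.mpr (by nlinarith)
      have hnum : Real.exp (-r * t₂) * S r ≤ Real.exp (-r * t₁) * S r :=
        mul_le_mul_of_nonneg_right hexp hSr
      exact (div_le_div_iff_of_pos_right hden).mpr hnum
  · -- the power bound
    intro T hT
    refine ⟨(1/π) * ((1/K) * (Real.Gamma γ * T ^ (1 - 2*γ) + Real.Gamma (1 - γ))), ?_⟩
    intro t ht htT
    have hΓγ : 0 < Real.Gamma γ := Real.Gamma_pos_of_pos hγ0
    have hΓγ' : 0 < Real.Gamma (1 - γ) := Real.Gamma_pos_of_pos (by linarith)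
    have h1 : (1/t : ℝ) ^ γ = t ^ (γ - 1) * t ^ (1 - 2*γ) := by
      rw [one_div, Real.inv_rpow ht.le, ← Real.rpow_neg ht.le, ← Real.rpow_add ht,
        show (γ - 1) + (1 - 2*γ) = -γ by ring]
    have h2 : (1/t : ℝ) ^ (1 - γ) = t ^ (γ - 1) := by
      rw [one_div, Real.inv_rpow ht.le, ← Real.rpow_neg ht.le,
        show -(1 - γ) = γ - 1 by ring]
    have h3 : t ^ (1 - 2*γ) ≤ T ^ (1 - 2*γ) :=
      Real.rpow_le_rpow ht.le htT (by linarith)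
    have h4 := hg_le t ht
    have h5 : (0:ℝ) ≤ t ^ (γ - 1) := Real.rpow_nonneg ht.le _
    calc g t ≤ (1/π) * ((1/K) * ((1/t) ^ γ * Real.Gamma γ + (1/t) ^ (1 - γ) * Real.Gamma (1 - γ))) := h4
      _ = (1/π) * ((1/K) * (t ^ (γ - 1) * t ^ (1 - 2*γ) * Real.Gamma γ
            + t ^ (γ - 1) * Real.Gamma (1 - γ))) := by rw [h1, h2]
      _ ≤ (1/π) * ((1/K) * (Real.Gamma γ * T ^ (1 - 2*γ) + Real.Gamma (1 - γ))) * t ^ (γ - 1) := by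
        have hc1 : (0:ℝ) ≤ 1/π := by positivity
        have hc2 : (0:ℝ) ≤ 1/K := by positivity
        have key : t ^ (γ - 1) * t ^ (1 - 2*γ) * Real.Gamma γ + t ^ (γ - 1) * Real.Gamma (1 - γ)
            ≤ (Real.Gamma γ * T ^ (1 - 2*γ) + Real.Gamma (1 - γ)) * t ^ (γ - 1) := by
          have hmm : t ^ (γ - 1) * t ^ (1 - 2*γ) * Real.Gamma γ
              ≤ t ^ (γ - 1) * T ^ (1 - 2*γ) * Real.Gamma γ :=
            mul_le_mul_of_nonneg_right (mul_le_mul_of_nonneg_left h3 h5) hΓγ.le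
          nlinarith [hmm]
        calc (1/π) * ((1/K) * (t ^ (γ - 1) * t ^ (1 - 2*γ) * Real.Gamma γ
              + t ^ (γ - 1) * Real.Gamma (1 - γ)))
            ≤ (1/π) * ((1/K) * ((Real.Gamma γ * T ^ (1 - 2*γ) + Real.Gamma (1 - γ)) * t ^ (γ - 1))) :=
              mul_le_mul_of_nonneg_left (mul_le_mul_of_nonneg_left key hc2) hc1
          _ = (1/π) * ((1/K) * (Real.Gamma γ * T ^ (1 - 2*γ) + Real.Gamma (1 - γ))) * t ^ (γ - 1) := by
              ring
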